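/- Let C be a self-dual code of length n over Z_{2^m}, C_0 a proper subcode of index 2 with C = C_0 ∪ C_2, C_0^⊥ = C_0 ∪ C_1 ∪ C_2 ∪ C_3 where C_1 = s + C_0, C_2 = t + C_0, C_3 = s + t + C_0 (t ∈ C \ C_0, s ∈ C_0^⊥ \ C). Suppose v_1, v_2 ∈ (Z_{2^m})^k satisfy v_1·v_1 ≡ −s·s, v_1·v_2 ≡ −t·s, v_2·v_2 ≡ −t·t (all mod 2^m). Then every element of C* = ⟨(v_1, C_1) ∪ (v_2, C_2)⟩ ⊆ (Z_{2^m})^{n+k} is orthogonal to every other element of C*, i.e., C* is a self-orthogonal code of length n+k. -/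

import Mathlib

open Finset

/-- Standard bilinear (dot) product on `Fin n → R`. -/
def dotp {R : Type*} [CommRing R] {n : ℕ} (u v : Fin n → R) : R := ∑ i, u i * v i

/-- Dual of a set of vectors with respect to the standard bilinear form. -/
def dualCode {R : Type*} [CommRing R] {n : ℕ} (S : Set (Fin n → R)) : Set (Fin n → R) :=
  {v | ∀ u ∈ S, dotp u v = 0}

/-- Euclidean weight of an element of `ZMod N`. -/
def wtE {N : ℕ} (a : ZMod N) : ℕ := min (a.val ^ 2) ((N - a.val) ^ 2)

/-- Euclidean weight of a vector. -/
def wtEv {N n : ℕ} (v : Fin n → ZMod N) : ℕ := ∑ i, wtE (v i)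

lemma dotp_comm {R : Type*} [CommRing R] {n : ℕ} (u v : Fin n → R) : dotp u v = dotp v u := by
  simp [dotp, mul_comm]

lemma dotp_add_left {R : Type*} [CommRing R] {n : ℕ} (u v w : Fin n → R) :
    dotp (u + v) w = dotp u w + dotp v w := by
  simp [dotp, add_mul, Finset.sum_add_distrib]

lemma dotp_add_right {R : Type*} [CommRing R] {n : ℕ} (u v w : Fin n → R) :
    dotp u (v + w) = dotp u v + dotp u w := by
  rw [dotp_comm, dotp_add_left, dotp_comm v, dotp_comm w]

lemma dotp_neg_left {R : Type*} [CommRing R] {n : ℕ} (u w : Fin n → R) :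
    dotp (-u) w = - dotp u w := by
  simp [dotp]

lemma dotp_zero_left {R : Type*} [CommRing R] {n : ℕ} (w : Fin n → R) :
    dotp 0 w = 0 := by simp [dotp]

lemma dotp_append {R : Type*} [CommRing R] {k n : ℕ} (a c : Fin k → R) (b d : Fin n → R) :
    dotp (Fin.append a b) (Fin.append c d) = dotp a c + dotp b d := by
  simp [dotp, Fin.sum_univ_add, Fin.append_left, Fin.append_right]

lemma orth_closure {R : Type*} [CommRing R] {N : ℕ} (S : Set (Fin N → R))
    (h : ∀ g ∈ S, ∀ g' ∈ S, dotp g g' = 0) :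
    ∀ x ∈ AddSubgroup.closure S, ∀ y ∈ AddSubgroup.closure S, dotp x y = 0 := by
  have key : ∀ g ∈ S, ∀ y ∈ AddSubgroup.closure S, dotp g y = 0 := by
    intro g hg y hy
    induction hy using AddSubgroup.closure_induction with
    | mem z hz => exact h g hg z hz
    | zero => rw [dotp_comm]; exact dotp_zero_left g
    | add a b ha hb iha ihb =>
        rw [dotp_comm, dotp_add_left, dotp_comm a, dotp_comm b, iha, ihb, add_zero]
    | neg a ha iha => rw [dotp_comm, dotp_neg_left, dotp_comm, iha, neg_zero]
  intro x hx y hy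
  induction hx using AddSubgroup.closure_induction with
  | mem z hz => exact key z hz y hy
  | zero => exact dotp_zero_left y
  | add a b ha hb iha ihb => rw [dotp_add_left, iha, ihb, add_zero]
  | neg a ha iha => rw [dotp_neg_left, iha, neg_zero]

theorem cstar_self_orthogonal (m n k : ℕ) (hm : 0 < m) (hn : 0 < n)
    (C C0 : AddSubgroup (Fin n → ZMod (2 ^ m)))
    (hC : (C : Set (Fin n → ZMod (2 ^ m))) = dualCode (C : Set (Fin n → ZMod (2 ^ m))))
    (hle : C0 ≤ C) (hidx : Nat.card C = 2 * Nat.card C0)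
    (t : Fin n → ZMod (2 ^ m)) (ht : t ∈ C) (ht0 : t ∉ C0)
    (s : Fin n → ZMod (2 ^ m))
    (hs : s ∈ dualCode (C0 : Set (Fin n → ZMod (2 ^ m)))) (hsC : s ∉ C)
    (v1 v2 : Fin k → ZMod (2 ^ m))
    (h11 : dotp v1 v1 = - dotp s s)
    (h12 : dotp v1 v2 = - dotp t s)
    (h22 : dotp v2 v2 = - dotp t t)
    (Cstar : AddSubgroup (Fin (k + n) → ZMod (2 ^ m)))
    (hCstar : Cstar = AddSubgroup.closure
      ((fun c => Fin.append v1 c) '' ((s + ·) '' (C0 : Set (Fin n → ZMod (2 ^ m)))) ∪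
       (fun c => Fin.append v2 c) '' ((t + ·) '' (C0 : Set (Fin n → ZMod (2 ^ m)))))) :
    ∀ x ∈ Cstar, ∀ y ∈ Cstar, dotp x y = 0 := by
  subst hCstar
  apply orth_closure
  have hCC : ∀ a ∈ C, ∀ b ∈ C, dotp a b = 0 := by
    intro a ha b hb
    have : b ∈ dualCode (C : Set (Fin n → ZMod (2 ^ m))) := hC ▸ hb
    exact this a ha
  have hsc : ∀ c ∈ C0, dotp s c = 0 := fun c hc => (dotp_comm s c).trans (hs c hc)
  have htc : ∀ c ∈ C0, dotp t c = 0 := fun c hc => hCC t ht c (hle hc)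
  have hcs : ∀ c ∈ C0, dotp c s = 0 := fun c hc => hs c hc
  have hct : ∀ c ∈ C0, dotp c t = 0 := fun c hc => hCC c (hle hc) t ht
  have hts : dotp t s = dotp t s := rfl
  rintro g (⟨_, ⟨c, hc, rfl⟩, rfl⟩ | ⟨_, ⟨c, hc, rfl⟩, rfl⟩) g'
      (⟨_, ⟨c', hc', rfl⟩, rfl⟩ | ⟨_, ⟨c', hc', rfl⟩, rfl⟩) <;>
    simp only [dotp_append, dotp_add_left, dotp_add_right, h11, h12, h22,
      hsc _ hc', htc _ hc', hcs _ hc, hct _ hc, hCC _ (hle hc) _ (hle hc'),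
      add_zero, zero_add]
  · ring
  · rw [dotp_comm s t]; ring
  · rw [dotp_comm v2 v1, h12]; ring
  · ring
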